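/- Let p ≥ 3 be an odd integer, set e_p := exp(2πi/p) and e_p^w := exp(2πi w/p) for w ∈ ℂ. Then for every λ ∈ ℂ and all complex numbers a_0, a_1, …, a_{p−1}: Σ_{m=0}^{p−1} a_m · Σ_{n=0}^{p−1} ( e_p^{λ+2n+1} + e_p^{−(λ+2n+1)} − 2 ) · σ_m( e_p^{λ+2n+1}, e_p ) = −2p · Σ_{m=0}^{(p−3)/2} (−1)^m a_m [2m+1 choose m]_{e_p} e_p^{−m(m+1)/2} + p · a_{p−1} · ( exp(2πiλ) + exp(−2πiλ) − 2 ). -/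

import Mathlib

/-- `e_p := exp(2πi/p)`. -/
noncomputable def ep (p : ℕ) : ℂ :=
  Complex.exp (2 * Real.pi * Complex.I / p)

/-- `e_p^w := exp(2πi w / p)`. -/
noncomputable def epow (p : ℕ) (w : ℂ) : ℂ :=
  Complex.exp (2 * Real.pi * Complex.I * w / p)

/-- `σ_m(x,ζ) = ∏_{i=1}^{m} (x + x⁻¹ − ζ^i − ζ^{−i})`. -/
noncomputable def sigma' (m : ℕ) (x ζ : ℂ) : ℂ :=
  ∏ i ∈ Finset.Icc 1 m, (x + x⁻¹ - ζ ^ i - (ζ ^ i)⁻¹)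

/-- Evaluation at `ζ : ℂ` of the Gaussian binomial coefficient `[n choose k]_q ∈ ℤ[q]`,
defined by the `q`-Pascal recursion, agreeing with
`∏_{i=1}^{k} (1−q^{n−k+i})/(1−q^i)` for `k ≤ n` and with `0` for `k > n`. -/
def qbinom : ℕ → ℕ → ℂ → ℂ
  | _, 0, _ => 1
  | 0, _ + 1, _ => 0
  | n + 1, k + 1, ζ => qbinom n k ζ + ζ ^ (k + 1) * qbinom n (k + 1) ζ

lemma qbinom_zero (n : ℕ) (q : ℂ) : qbinom n 0 q = 1 := by cases n <;> rfl

lemma qbinom_succ_succ (n k : ℕ) (q : ℂ) :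
    qbinom (n+1) (k+1) q = qbinom n k q + q ^ (k+1) * qbinom n (k+1) q := rfl

lemma qbinom_eq_zero {n k : ℕ} (h : n < k) (q : ℂ) : qbinom n k q = 0 := by
  induction n generalizing k with
  | zero => obtain ⟨k, rfl⟩ : ∃ k', k = k' + 1 := ⟨k - 1, by omega⟩; rfl
  | succ n ih =>
    obtain ⟨k, rfl⟩ : ∃ k', k = k' + 1 := ⟨k - 1, by omega⟩
    rw [qbinom_succ_succ, ih (by omega), ih (by omega)]; ring

lemma qbinom_self (n : ℕ) (q : ℂ) : qbinom n n q = 1 := by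
  induction n with
  | zero => rfl
  | succ n ih => rw [qbinom_succ_succ, ih, qbinom_eq_zero (by omega)]; ring

lemma qbinom_pascal2 (n k : ℕ) (q : ℂ) :
    qbinom (n+1) (k+1) q = qbinom n (k+1) q + q ^ (n - k) * qbinom n k q := by
  induction n generalizing k with
  | zero =>
    cases k with
    | zero => simp [qbinom_succ_succ, qbinom_zero, qbinom_eq_zero (by omega : (0:ℕ) < 1)]
    | succ k => simp [qbinom_succ_succ, qbinom_eq_zero (by omega : (0:ℕ) < k+1),
        qbinom_eq_zero (by omega : (0:ℕ) < k+2), qbinom_eq_zero (by omega : (1:ℕ) < k+2)]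
  | succ n ih =>
    cases k with
    | zero =>
      have I0 := ih 0
      rw [Nat.sub_zero] at I0
      rw [Nat.sub_zero, qbinom_zero]
      have Dtop := qbinom_succ_succ (n+1) 0 q
      have Dm := qbinom_succ_succ n 0 q
      rw [qbinom_zero] at Dtop Dm
      linear_combination Dtop + q * I0 - Dm + (q*q^n) * (qbinom_zero n q)
    | succ k =>
      by_cases hnk : k + 1 ≤ n
      · obtain ⟨d, rfl⟩ : ∃ d, n = k + 1 + d := ⟨n - (k+1), by omega⟩
        have I1 := ih (k+1); have I0 := ih k
        rw [show k+1+d - (k+1) = d from by omega] at I1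
        rw [show k+1+d - k = d+1 from by omega] at I0
        rw [show k+1+d+1 - (k+1) = d+1 from by omega]
        linear_combination (qbinom_succ_succ (k+1+d+1) (k+1) q) + q^(k+2) * I1 + I0
          - q^(d+1) * (qbinom_succ_succ (k+1+d) k q) - (qbinom_succ_succ (k+1+d) (k+1) q)
      · rw [qbinom_succ_succ, ih k, ih (k+1),
          qbinom_eq_zero (show n < k+1 by omega) q, qbinom_eq_zero (show n < k+2 by omega) q,
          show n+1 - (k+1) = n - k from by omega]
        rcases eq_or_lt_of_le (show n ≤ k by omega) with h | h
        · subst h; rw [Nat.sub_self]; ring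
        · rw [qbinom_eq_zero h q]; ring

lemma qbinom_absorb (n k : ℕ) (q : ℂ) :
    (1 - q^(k+1)) * qbinom n (k+1) q = (1 - q^(n-k)) * qbinom n k q := by
  linear_combination (qbinom_succ_succ n k q) - (qbinom_pascal2 n k q)

lemma qbinom_symm (n : ℕ) : ∀ k : ℕ, k ≤ n → qbinom n (n - k) q = qbinom n k q := by
  induction n with
  | zero => intro k hk; interval_cases k; rfl
  | succ n ih =>
    intro k hk
    cases k with
    | zero => rw [Nat.sub_zero, qbinom_self, qbinom_zero]
    | succ k =>
      rcases eq_or_lt_of_le (show k ≤ n by omega) with h | h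
      · subst h; rw [Nat.sub_self, qbinom_zero, qbinom_self]
      · have e : n - k = (n - (k+1)) + 1 := by omega
        rw [show (n+1) - (k+1) = n - k from by omega, e, qbinom_succ_succ,
          qbinom_pascal2, ih (k+1) (by omega), ← e, ih k (by omega)]

lemma qbinom_vanish {p : ℕ} (hp : 3 ≤ p) {ζ : ℂ} (hprim : IsPrimitiveRoot ζ p) {m : ℕ}
    (h1 : p ≤ 2*m+1) (h2 : m ≤ p - 2) : qbinom (2*m+1) m ζ = 0 := by
  have hz1 : ∀ i : ℕ, 0 < i → i < p → (1:ℂ) - ζ^i ≠ 0 := fun i hi1 hi2 =>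
    sub_ne_zero.mpr (Ne.symm (hprim.pow_ne_one_of_pos_of_lt hi1.ne' hi2))
  have hzp : ζ^p = 1 := hprim.pow_eq_one
  set j0 := 2*m+2-p with hj0
  have base : qbinom (2*m+1) j0 ζ = 0 := by
    have h := qbinom_absorb (2*m+1) (j0-1) ζ
    rw [show j0 - 1 + 1 = j0 from by omega, show 2*m+1 - (j0-1) = p from by omega, hzp,
      sub_self, zero_mul] at h
    exact (mul_eq_zero.mp h).resolve_left (hz1 j0 (by omega) (by omega))
  have main : ∀ t : ℕ, j0 + t ≤ m → qbinom (2*m+1) (j0 + t) ζ = 0 := by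
    intro t; induction t with
    | zero => intro _; simpa using base
    | succ t ih =>
      intro ht
      have h := qbinom_absorb (2*m+1) (j0+t) ζ
      rw [show j0 + t + 1 = j0 + (t+1) from rfl, ih (by omega), mul_zero] at h
      exact (mul_eq_zero.mp h).resolve_left (hz1 (j0+(t+1)) (by omega) (by omega))
  have h := main (m - j0) (by omega)
  rwa [show j0 + (m - j0) = m from by omega] at h

lemma qbinom_top {p : ℕ} (hp : 3 ≤ p) {ζ : ℂ} (hprim : IsPrimitiveRoot ζ p) :
    qbinom (2*p-1) (p-1) ζ = 1 := by
  have hz1 : ∀ i : ℕ, 0 < i → i < p → (1:ℂ) - ζ^i ≠ 0 := fun i hi1 hi2 =>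
    sub_ne_zero.mpr (Ne.symm (hprim.pow_ne_one_of_pos_of_lt hi1.ne' hi2))
  have hzp : ζ^p = 1 := hprim.pow_eq_one
  have chain : ∀ k : ℕ, k ≤ p - 1 →
      (∏ i ∈ Finset.range k, (1 - ζ^(i+1))) * qbinom (2*p-1) k ζ =
      ∏ i ∈ Finset.range k, (1 - ζ^(p-1-i)) := by
    intro k; induction k with
    | zero => intro _; simp [qbinom_zero]
    | succ k ih =>
      intro hk
      rw [Finset.prod_range_succ, Finset.prod_range_succ, ← ih (by omega)]
      have habs := qbinom_absorb (2*p-1) k ζ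
      rw [show (1:ℂ) - ζ^(2*p-1-k) = 1 - ζ^(p-1-k) from by
        rw [show 2*p-1-k = p + (p-1-k) from by omega, pow_add, hzp, one_mul]] at habs
      rw [mul_assoc, habs]; ring
  have h := chain (p-1) le_rfl
  have e : ∏ i ∈ Finset.range (p-1), (1 - ζ^(p-1-i)) =
      ∏ i ∈ Finset.range (p-1), (1 - ζ^(i+1)) := by
    rw [← Finset.prod_range_reflect]
    apply Finset.prod_congr rfl
    intro i hi
    rw [Finset.mem_range] at hi
    congr 2
    omega
  rw [e] at h
  have hne : (∏ i ∈ Finset.range (p-1), (1 - ζ^(i+1))) ≠ 0 := by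
    apply Finset.prod_ne_zero_iff.mpr
    intro i hi
    rw [Finset.mem_range] at hi
    exact hz1 (i+1) (by omega) (by omega)
  have := mul_left_cancel₀ hne (h.trans (mul_one _).symm)
  exact this

lemma qbinom_thm (q x : ℂ) : ∀ N : ℕ, ∏ i ∈ Finset.range N, (x - q^i) =
    ∑ j ∈ Finset.range (N+1), (-1)^j * q^(∑ i ∈ Finset.range j, i) * qbinom N j q * x^(N-j) := by
  intro N
  induction N with
  | zero => simp [qbinom_zero]
  | succ N ih =>
    rw [Finset.prod_range_succ, ih]
    rw [Finset.sum_range_succ'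
      (fun j => (-1)^j * q^(∑ i ∈ Finset.range j, i) * qbinom (N+1) j q * x^(N+1-j)) (N+1)]
    have hAB : ∀ i ∈ Finset.range (N+1),
        (-1:ℂ)^(i+1) * q^(∑ t ∈ Finset.range (i+1), t) * qbinom (N+1) (i+1) q * x^(N+1-(i+1)) =
        ((-1)^(i+1) * q^(∑ t ∈ Finset.range (i+1), t) * qbinom N (i+1) q * x^(N-i)
          - q^N * ((-1)^i * q^(∑ t ∈ Finset.range i, t) * qbinom N i q * x^(N-i))) := by
      intro i hi
      rw [Finset.mem_range] at hi
      have e2 : q^i * q^(N-i) = q^N := by rw [← pow_add]; congr 1; omega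
      rw [qbinom_pascal2, Finset.sum_range_succ, pow_add,
        show N+1-(i+1) = N-i from by omega]
      linear_combination ((-1):ℂ)^(i+1) * q^(∑ t ∈ Finset.range i, t) * qbinom N i q * x^(N-i) * e2
    rw [Finset.sum_congr rfl hAB, Finset.sum_sub_distrib, ← Finset.mul_sum]
    have hSx : (∑ j ∈ Finset.range (N+1), (-1:ℂ)^j * q^(∑ i ∈ Finset.range j, i) * qbinom N j q * x^(N-j)) * x
        = ∑ j ∈ Finset.range (N+1), (-1:ℂ)^j * q^(∑ i ∈ Finset.range j, i) * qbinom N j q * x^(N+1-j) := by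
      rw [Finset.sum_mul]
      apply Finset.sum_congr rfl
      intro j hj
      rw [Finset.mem_range] at hj
      calc (-1:ℂ)^j * q^(∑ i ∈ Finset.range j, i) * qbinom N j q * x^(N-j) * x
          = (-1:ℂ)^j * q^(∑ i ∈ Finset.range j, i) * qbinom N j q * (x^(N-j) * x) := by ring
        _ = (-1:ℂ)^j * q^(∑ i ∈ Finset.range j, i) * qbinom N j q * x^(N+1-j) := by
            rw [← pow_succ, show N-j+1 = N+1-j from by omega]
    have hA : ∑ i ∈ Finset.range (N+1),
        ((-1:ℂ)^(i+1) * q^(∑ t ∈ Finset.range (i+1), t) * qbinom N (i+1) q * x^(N-i))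
        = (∑ j ∈ Finset.range (N+1), (-1:ℂ)^j * q^(∑ i ∈ Finset.range j, i) * qbinom N j q * x^(N-j)) * x
          - x^(N+1) := by
      rw [hSx, Finset.sum_range_succ'
        (fun j => (-1:ℂ)^j * q^(∑ i ∈ Finset.range j, i) * qbinom N j q * x^(N+1-j)) N]
      rw [Finset.sum_range_succ, qbinom_eq_zero (show N < N+1 by omega)]
      simp [qbinom_zero, Nat.succ_sub_succ]
    rw [hA, qbinom_zero]
    simp only [Nat.sub_zero]
    ring

lemma key (ζ x : ℂ) (hz : ζ ≠ 0) (hx : x ≠ 0) (m : ℕ) :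
    (x + x⁻¹ - 2) * sigma' m x ζ =
    ∑ j ∈ Finset.range (2*m+2),
      (-1:ℂ)^j * ζ^(((∑ i ∈ Finset.range j, i : ℕ) : ℤ) - ((m*j : ℕ) : ℤ)) *
      qbinom (2*m+1) j ζ * (x^((m:ℤ)+1-(j:ℕ)) - x^((m:ℤ)-(j:ℕ))) := by
  have hzm : (ζ:ℂ)^m ≠ 0 := pow_ne_zero _ hz
  have h1 : (x + x⁻¹ - 2) * sigma' m x ζ
      = ∏ i ∈ Finset.range (m+1), (x + x⁻¹ - ζ^i - (ζ^i)⁻¹) := by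
    rw [sigma', ← Finset.Ico_add_one_right_eq_Icc, Finset.range_eq_Ico,
      Finset.prod_eq_prod_Ico_succ_bot (show 0 < m+1 by omega)]
    rw [pow_zero, inv_one]
    ring
  have h2 : ∀ i ∈ Finset.range (m+1), x + x⁻¹ - ζ^i - (ζ^i)⁻¹
      = (x⁻¹ * (ζ^m)⁻¹) * ((x - ζ^i) * (ζ^m * x - ζ^m * (ζ^i)⁻¹)) := by
    intro i _
    have hzi : (ζ:ℂ)^i ≠ 0 := pow_ne_zero _ hz
    field_simp
    ring
  have h3 : ∏ i ∈ Finset.range (m+1), (ζ^m * x - ζ^m * (ζ^i)⁻¹)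
      = ∏ k ∈ Finset.range (m+1), (ζ^m * x - ζ^k) := by
    rw [← Finset.prod_range_reflect (fun k => ζ^m * x - ζ^k) (m+1)]
    apply Finset.prod_congr rfl
    intro i hi; rw [Finset.mem_range] at hi
    have e : ζ^m = ζ^(m+1-1-i) * ζ^i := by rw [← pow_add]; congr 1; omega
    rw [e, mul_assoc (ζ^(m+1-1-i)) (ζ^i) ((ζ^i)⁻¹),
      mul_inv_cancel₀ (pow_ne_zero i hz), mul_one]
  have h4 : ∏ i ∈ Finset.range (m+1), (x - ζ^i)
      = (((ζ^m)⁻¹)^(m+1)) * ∏ i ∈ Finset.range (m+1), (ζ^m * x - ζ^(m+i)) := by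
    have hh : ∀ i ∈ Finset.range (m+1), x - ζ^i = (ζ^m)⁻¹ * (ζ^m * x - ζ^(m+i)) := by
      intro i _
      rw [pow_add]
      field_simp
    rw [Finset.prod_congr rfl hh, Finset.prod_mul_distrib, Finset.prod_const,
      Finset.card_range]
  have h5 : (∏ i ∈ Finset.range (m+1), (ζ^m * x - ζ^(m+i)))
        * (∏ k ∈ Finset.range (m+1), (ζ^m * x - ζ^k))
      = (ζ^m * x - ζ^m) * ∏ j ∈ Finset.range (2*m+1), (ζ^m * x - ζ^j) := by
    rw [show 2*m+1 = m + (m+1) from by omega,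
      Finset.prod_range_add (fun j => ζ^m * x - ζ^j) m (m+1),
      Finset.prod_range_succ (fun k => ζ^m * x - ζ^k) m]
    ring
  have h6 := qbinom_thm ζ (ζ^m * x) (2*m+1)
  calc (x + x⁻¹ - 2) * sigma' m x ζ
      = ∏ i ∈ Finset.range (m+1), (x + x⁻¹ - ζ^i - (ζ^i)⁻¹) := h1
    _ = ∏ i ∈ Finset.range (m+1),
          ((x⁻¹ * (ζ^m)⁻¹) * ((x - ζ^i) * (ζ^m * x - ζ^m * (ζ^i)⁻¹))) :=
        Finset.prod_congr rfl h2
    _ = (x⁻¹ * (ζ^m)⁻¹)^(m+1) * ((∏ i ∈ Finset.range (m+1), (x - ζ^i))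
          * (∏ i ∈ Finset.range (m+1), (ζ^m * x - ζ^m * (ζ^i)⁻¹))) := by
        rw [Finset.prod_mul_distrib, Finset.prod_mul_distrib, Finset.prod_mul_distrib,
          Finset.prod_const, Finset.prod_const, Finset.card_range, mul_pow]
    _ = ((x⁻¹ * (ζ^m)⁻¹)^(m+1) * (((ζ^m)⁻¹)^(m+1)))
          * ((∏ i ∈ Finset.range (m+1), (ζ^m * x - ζ^(m+i)))
            * (∏ k ∈ Finset.range (m+1), (ζ^m * x - ζ^k))) := by
        rw [h3, h4]; ring
    _ = (((x⁻¹ * (ζ^m)⁻¹)^(m+1) * (((ζ^m)⁻¹)^(m+1))) * (ζ^m * x - ζ^m))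
          * ∏ j ∈ Finset.range (2*m+1), (ζ^m * x - ζ^j) := by
        rw [h5]; ring
    _ = ∑ j ∈ Finset.range (2*m+2),
          (((x⁻¹ * (ζ^m)⁻¹)^(m+1) * (((ζ^m)⁻¹)^(m+1))) * (ζ^m * x - ζ^m))
          * ((-1:ℂ)^j * (ζ:ℂ)^(∑ i ∈ Finset.range j, i) * qbinom (2*m+1) j ζ
            * (ζ^m * x)^(2*m+1-j)) := by
        rw [h6, Finset.mul_sum]
    _ = ∑ j ∈ Finset.range (2*m+2),
          (-1:ℂ)^j * ζ^(((∑ i ∈ Finset.range j, i : ℕ) : ℤ) - ((m*j : ℕ) : ℤ)) *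
          qbinom (2*m+1) j ζ * (x^((m:ℤ)+1-(j:ℕ)) - x^((m:ℤ)-(j:ℕ))) := by
        apply Finset.sum_congr rfl
        intro j hj; rw [Finset.mem_range] at hj
        have hyx : (ζ^m * x) ≠ 0 := mul_ne_zero hzm hx
        have h7 : (ζ^m * x)^(2*m+1-j) = (ζ^m * x)^(2*m+1) * (((ζ^m * x)^j)⁻¹) :=
          pow_sub₀ _ hyx (by omega)
        have h8 : x^((m:ℤ)+1-(j:ℕ)) - x^((m:ℤ)-(j:ℕ)) = x^m * (x^j)⁻¹ * (x - 1) := by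
          have e1 : (m:ℤ)+1-(j:ℕ) = ((m:ℤ)-(j:ℕ))+1 := by ring
          rw [e1, zpow_add_one₀ hx, zpow_sub₀ hx, zpow_natCast, zpow_natCast,
            div_eq_mul_inv]
          ring
        have h9 : ζ^(((∑ i ∈ Finset.range j, i : ℕ) : ℤ) - ((m*j : ℕ) : ℤ))
            = ζ^(∑ i ∈ Finset.range j, i) * (ζ^(m*j))⁻¹ := by
          rw [zpow_sub₀ hz, zpow_natCast, zpow_natCast, div_eq_mul_inv]
        rw [h7, h8, h9]
        simp only [mul_pow, inv_pow, ← pow_mul]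
        field_simp
        ring

lemma sum_epow_zpow (p : ℕ) (hp : 3 ≤ p) (hodd : Odd p) (lam : ℂ) (d : ℤ) :
    ∑ n ∈ Finset.range p, (epow p (lam + 2*n + 1))^d
      = if (p:ℤ) ∣ d then (p:ℂ) * epow p (d * (lam+1)) else 0 := by
  have hp0 : p ≠ 0 := by omega
  have hprim : IsPrimitiveRoot (ep p) p := Complex.isPrimitiveRoot_exp p hp0
  have hterm : ∀ n : ℕ, (epow p (lam + 2*(n:ℂ) + 1))^d
      = epow p (d * (lam+1)) * ((ep p)^(2*d))^n := by
    intro n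
    have e1 : (epow p (lam + 2*(n:ℂ) + 1))^d = epow p (d * (lam + 2*n + 1)) := by
      rw [epow, epow, ← Complex.exp_int_mul]; congr 1; push_cast; ring
    have e2 : ((ep p)^(2*d))^n = epow p (2*d*n) := by
      rw [ep, ← Complex.exp_int_mul (2 * Real.pi * Complex.I / p) (2*d),
        ← Complex.exp_nat_mul, epow]
      congr 1; push_cast; ring
    rw [e1, e2, epow, epow, epow, ← Complex.exp_add]; congr 1; push_cast; ring
  simp only [hterm]
  rw [← Finset.mul_sum]
  by_cases hdvd : (p:ℤ) ∣ d
  · rw [if_pos hdvd]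
    have hω : (ep p)^(2*d) = 1 := (hprim.zpow_eq_one_iff_dvd (2*d)).mpr (hdvd.mul_left 2)
    rw [hω]
    simp [Finset.card_range]
    ring
  · rw [if_neg hdvd]
    have hω : (ep p)^(2*d) ≠ 1 := by
      intro h
      apply hdvd
      have h2 : (p:ℤ) ∣ 2*d := (hprim.zpow_eq_one_iff_dvd (2*d)).mp h
      have hcop : IsCoprime ((p:ℤ)) 2 := by
        rw [show (2:ℤ) = ((2:ℕ):ℤ) from rfl, Int.isCoprime_iff_gcd_eq_one,
          Int.gcd_natCast_natCast]
        exact (Nat.coprime_two_right.mpr hodd)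
      exact hcop.dvd_of_dvd_mul_left h2
    rw [geom_sum_eq hω p]
    have hωp : ((ep p)^(2*d))^p = 1 := by
      rw [← zpow_natCast ((ep p)^(2*d)) p, ← zpow_mul, mul_comm, zpow_mul,
        zpow_natCast, hprim.pow_eq_one, one_zpow]
    rw [hωp]
    simp

lemma ep_zpow (p : ℕ) (d : ℤ) : (ep p)^d = epow p (d:ℂ) := by
  rw [ep, epow, ← Complex.exp_int_mul]; congr 1; ring

lemma epow_neg_eq_inv (p : ℕ) (w : ℂ) : epow p (-w) = (epow p w)⁻¹ := by
  rw [epow, epow, ← Complex.exp_neg]; congr 1; ring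

lemma epow_zero (p : ℕ) : epow p 0 = 1 := by
  rw [epow]; simp

lemma S_lt (p : ℕ) (hp : 3 ≤ p) (hodd : Odd p) (lam : ℂ) (m : ℕ) (hm : m < p - 1) :
    ∑ n ∈ Finset.range p, ((epow p (lam + 2*n + 1) + epow p (-(lam + 2*n + 1)) - 2)
        * sigma' m (epow p (lam + 2*n+1)) (ep p))
    = -2*p*((-1)^m * qbinom (2*m+1) m (ep p) * epow p (-((m:ℂ)*(m+1))/2)) := by
  have hzz : ep p ≠ 0 := Complex.exp_ne_zero _
  have hkey : ∀ n ∈ Finset.range p, (epow p (lam + 2*n + 1) + epow p (-(lam + 2*n + 1)) - 2)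
        * sigma' m (epow p (lam + 2*n+1)) (ep p)
      = ∑ j ∈ Finset.range (2*m+2),
          (-1:ℂ)^j * (ep p)^(((∑ i ∈ Finset.range j, i : ℕ):ℤ) - ((m*j:ℕ):ℤ))
          * qbinom (2*m+1) j (ep p)
          * ((epow p (lam+2*n+1))^((m:ℤ)+1-(j:ℕ)) - (epow p (lam+2*n+1))^((m:ℤ)-(j:ℕ))) := by
    intro n _
    rw [epow_neg_eq_inv]
    exact key (ep p) _ hzz (Complex.exp_ne_zero _) m
  rw [Finset.sum_congr rfl hkey, Finset.sum_comm]
  have hj : ∀ j ∈ Finset.range (2*m+2),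
      (∑ n ∈ Finset.range p,
        (-1:ℂ)^j * (ep p)^(((∑ i ∈ Finset.range j, i : ℕ):ℤ) - ((m*j:ℕ):ℤ))
          * qbinom (2*m+1) j (ep p)
          * ((epow p (lam+2*n+1))^((m:ℤ)+1-(j:ℕ)) - (epow p (lam+2*n+1))^((m:ℤ)-(j:ℕ))))
      = (-1:ℂ)^j * (ep p)^(((∑ i ∈ Finset.range j, i : ℕ):ℤ) - ((m*j:ℕ):ℤ))
          * qbinom (2*m+1) j (ep p)
          * ((if (p:ℤ) ∣ ((m:ℤ)+1-(j:ℕ)) then (p:ℂ) * epow p (((((m:ℤ)+1-(j:ℕ) : ℤ)):ℂ) * (lam+1)) else 0)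
            - (if (p:ℤ) ∣ ((m:ℤ)-(j:ℕ)) then (p:ℂ) * epow p (((((m:ℤ)-(j:ℕ) : ℤ)):ℂ) * (lam+1)) else 0)) := by
    intro j _
    rw [← Finset.mul_sum, Finset.sum_sub_distrib,
      sum_epow_zpow p hp hodd lam ((m:ℤ)+1-(j:ℕ)), sum_epow_zpow p hp hodd lam ((m:ℤ)-(j:ℕ))]
  rw [Finset.sum_congr rfl hj]
  have hsub : ({m, m+1} : Finset ℕ) ⊆ Finset.range (2*m+2) := by
    intro t ht
    simp only [Finset.mem_insert, Finset.mem_singleton] at ht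
    rw [Finset.mem_range]; omega
  rw [← Finset.sum_subset hsub (by
    intro j hj1 hj2
    rw [Finset.mem_range] at hj1
    simp only [Finset.mem_insert, Finset.mem_singleton] at hj2
    push_neg at hj2
    have h1 : ¬ (p:ℤ) ∣ ((m:ℤ)+1-(j:ℕ)) := by
      intro h
      have := Int.eq_zero_of_abs_lt_dvd h (by
        rw [abs_lt]; constructor <;> [push_cast; skip] <;> omega)
      omega
    have h2 : ¬ (p:ℤ) ∣ ((m:ℤ)-(j:ℕ)) := by
      intro h
      have := Int.eq_zero_of_abs_lt_dvd h (by rw [abs_lt]; constructor <;> omega)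
      omega
    rw [if_neg h1, if_neg h2, sub_zero, mul_zero])]
  rw [Finset.sum_pair (by omega : m ≠ m+1)]
  have ed1 : (m:ℤ)+1-((m:ℕ):ℤ) = 1 := by omega
  have ed2 : (m:ℤ)-((m:ℕ):ℤ) = 0 := by omega
  have ed3 : (m:ℤ)+1-(((m+1):ℕ):ℤ) = 0 := by push_cast; ring
  have ed4 : (m:ℤ)-(((m+1):ℕ):ℤ) = -1 := by push_cast; ring
  rw [ed1, ed2, ed3, ed4]
  have hnd1 : ¬ (p:ℤ) ∣ (1:ℤ) := by
    intro h; have := Int.le_of_dvd one_pos h; omega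
  have hnd4 : ¬ (p:ℤ) ∣ (-1:ℤ) := by
    intro h; rw [dvd_neg] at h; exact hnd1 h
  rw [if_neg hnd1, if_neg hnd4, if_pos (dvd_zero _)]
  rw [show ((0:ℤ):ℂ) * (lam+1) = 0 from by norm_num, epow_zero]
  have hE : ((∑ i ∈ Finset.range (m+1), i : ℕ):ℤ) - ((m*(m+1):ℕ):ℤ)
      = ((∑ i ∈ Finset.range m, i : ℕ):ℤ) - ((m*m:ℕ):ℤ) := by
    rw [Finset.sum_range_succ]
    push_cast
    ring
  have hsymmQ : qbinom (2*m+1) (m+1) (ep p) = qbinom (2*m+1) m (ep p) := by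
    have h := qbinom_symm (q := ep p) (2*m+1) m (by omega)
    rwa [show 2*m+1-m = m+1 from by omega] at h
  have hQE : (ep p)^(((∑ i ∈ Finset.range m, i : ℕ):ℤ) - ((m*m:ℕ):ℤ))
      = epow p (-((m:ℂ)*(m+1))/2) := by
    rw [ep_zpow]
    congr 1
    rw [eq_div_iff (two_ne_zero : (2:ℂ) ≠ 0)]
    have hg := Finset.sum_range_id_mul_two m
    rcases Nat.eq_zero_or_pos m with h0 | h0
    · subst h0; simp
    · have hc : ((m*(m-1):ℕ):ℂ) = (m:ℂ)*((m:ℂ)-1) := by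
        push_cast [h0]
        ring
      have h2 : (((∑ i ∈ Finset.range m, i) * 2 : ℕ):ℂ) = ((m*(m-1) : ℕ):ℂ) := by rw [hg]
      rw [hc] at h2
      push_cast at h2 ⊢
      linear_combination h2
  rw [hE, hsymmQ, hQE]
  ring

lemma S_top (p : ℕ) (hp : 3 ≤ p) (hodd : Odd p) (lam : ℂ) :
    ∑ n ∈ Finset.range p, ((epow p (lam + 2*n + 1) + epow p (-(lam + 2*n + 1)) - 2)
        * sigma' (p-1) (epow p (lam + 2*n+1)) (ep p))
    = (p:ℂ) * (Complex.exp (2*Real.pi*Complex.I*lam)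
        + Complex.exp (-(2*Real.pi*Complex.I*lam)) - 2) := by
  obtain ⟨m, rfl⟩ : ∃ m, p = m+1 := ⟨p-1, by omega⟩
  have hm2 : 2 ≤ m := by omega
  have hme : Even m := by
    rcases hodd with ⟨k, hk⟩
    exact ⟨k, by omega⟩
  have hprim : IsPrimitiveRoot (ep (m+1)) (m+1) := Complex.isPrimitiveRoot_exp (m+1) (by omega)
  simp only [Nat.add_sub_cancel]
  have hzz : ep (m+1) ≠ 0 := Complex.exp_ne_zero _
  have hkey : ∀ n ∈ Finset.range (m+1),
      (epow (m+1) (lam + 2*n + 1) + epow (m+1) (-(lam + 2*n + 1)) - 2)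
        * sigma' m (epow (m+1) (lam + 2*n+1)) (ep (m+1))
      = ∑ j ∈ Finset.range (2*m+2),
          (-1:ℂ)^j * (ep (m+1))^(((∑ i ∈ Finset.range j, i : ℕ):ℤ) - ((m*j:ℕ):ℤ))
          * qbinom (2*m+1) j (ep (m+1))
          * ((epow (m+1) (lam+2*n+1))^((m:ℤ)+1-(j:ℕ)) - (epow (m+1) (lam+2*n+1))^((m:ℤ)-(j:ℕ))) := by
    intro n _
    rw [epow_neg_eq_inv]
    exact key (ep (m+1)) _ hzz (Complex.exp_ne_zero _) m
  rw [Finset.sum_congr rfl hkey, Finset.sum_comm]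
  have hj : ∀ j ∈ Finset.range (2*m+2),
      (∑ n ∈ Finset.range (m+1),
        (-1:ℂ)^j * (ep (m+1))^(((∑ i ∈ Finset.range j, i : ℕ):ℤ) - ((m*j:ℕ):ℤ))
          * qbinom (2*m+1) j (ep (m+1))
          * ((epow (m+1) (lam+2*n+1))^((m:ℤ)+1-(j:ℕ)) - (epow (m+1) (lam+2*n+1))^((m:ℤ)-(j:ℕ))))
      = (-1:ℂ)^j * (ep (m+1))^(((∑ i ∈ Finset.range j, i : ℕ):ℤ) - ((m*j:ℕ):ℤ))
          * qbinom (2*m+1) j (ep (m+1))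
          * ((if ((m+1:ℕ):ℤ) ∣ ((m:ℤ)+1-(j:ℕ)) then ((m+1:ℕ):ℂ) * epow (m+1) (((((m:ℤ)+1-(j:ℕ) : ℤ)):ℂ) * (lam+1)) else 0)
            - (if ((m+1:ℕ):ℤ) ∣ ((m:ℤ)-(j:ℕ)) then ((m+1:ℕ):ℂ) * epow (m+1) (((((m:ℤ)-(j:ℕ) : ℤ)):ℂ) * (lam+1)) else 0)) := by
    intro j _
    rw [← Finset.mul_sum, Finset.sum_sub_distrib,
      sum_epow_zpow (m+1) hp hodd lam ((m:ℤ)+1-(j:ℕ)), sum_epow_zpow (m+1) hp hodd lam ((m:ℤ)-(j:ℕ))]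
  rw [Finset.sum_congr rfl hj]
  have hsub : ({0, m, m+1, 2*m+1} : Finset ℕ) ⊆ Finset.range (2*m+2) := by
    intro t ht
    simp only [Finset.mem_insert, Finset.mem_singleton] at ht
    rw [Finset.mem_range]; omega
  rw [← Finset.sum_subset hsub (by
    intro j hj1 hj2
    rw [Finset.mem_range] at hj1
    simp only [Finset.mem_insert, Finset.mem_singleton] at hj2
    push_neg at hj2
    have h1 : ¬ ((m+1:ℕ):ℤ) ∣ ((m:ℤ)+1-(j:ℕ)) := by
      intro h
      have := Int.eq_zero_of_abs_lt_dvd h (by rw [abs_lt]; constructor <;> [push_cast; push_cast] <;> omega)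
      omega
    have h2 : ¬ ((m+1:ℕ):ℤ) ∣ ((m:ℤ)-(j:ℕ)) := by
      intro h
      have := Int.eq_zero_of_abs_lt_dvd h (by rw [abs_lt]; constructor <;> [push_cast; push_cast] <;> omega)
      omega
    rw [if_neg h1, if_neg h2, sub_zero, mul_zero])]
  rw [Finset.sum_insert (by simp only [Finset.mem_insert, Finset.mem_singleton]; omega),
    Finset.sum_insert (by simp only [Finset.mem_insert, Finset.mem_singleton]; omega),
    Finset.sum_insert (by simp only [Finset.mem_singleton]; omega),
    Finset.sum_singleton]
  have ed0a : (m:ℤ)+1-((0:ℕ):ℤ) = ((m+1:ℕ):ℤ) := by push_cast; ring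
  have ed0b : (m:ℤ)-((0:ℕ):ℤ) = (m:ℤ) := by push_cast; ring
  have ed1 : (m:ℤ)+1-((m:ℕ):ℤ) = 1 := by omega
  have ed2 : (m:ℤ)-((m:ℕ):ℤ) = 0 := by omega
  have ed3 : (m:ℤ)+1-(((m+1):ℕ):ℤ) = 0 := by push_cast; ring
  have ed4 : (m:ℤ)-(((m+1):ℕ):ℤ) = -1 := by push_cast; ring
  have ed5 : (m:ℤ)+1-(((2*m+1):ℕ):ℤ) = -(m:ℤ) := by push_cast; ring
  have ed6 : (m:ℤ)-(((2*m+1):ℕ):ℤ) = -((m+1:ℕ):ℤ) := by push_cast; ring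
  rw [ed0a, ed0b, ed1, ed2, ed3, ed4, ed5, ed6]
  have hndm : ¬ ((m+1:ℕ):ℤ) ∣ (m:ℤ) := by
    intro h
    have := Int.eq_zero_of_abs_lt_dvd h (by rw [abs_lt]; constructor <;> omega)
    omega
  have hndnm : ¬ ((m+1:ℕ):ℤ) ∣ (-(m:ℤ)) := by
    rw [dvd_neg]; exact hndm
  have hnd1 : ¬ ((m+1:ℕ):ℤ) ∣ (1:ℤ) := by
    intro h; have := Int.le_of_dvd one_pos h; omega
  have hnd4 : ¬ ((m+1:ℕ):ℤ) ∣ (-1:ℤ) := by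
    rw [dvd_neg]; exact hnd1
  rw [if_pos (dvd_refl _), if_neg hndm, if_neg hnd1, if_pos (dvd_zero _), if_neg hnd4,
    if_neg hndnm, if_pos (dvd_neg.mpr (dvd_refl _))]
  rw [show ((0:ℤ):ℂ) * (lam+1) = 0 from by norm_num, epow_zero]
  -- exp conversions
  have hne : ((m+1:ℕ):ℂ) ≠ 0 := Nat.cast_ne_zero.mpr (by omega)
  have hcast : (((m+1:ℕ):ℤ):ℂ) = ((m+1:ℕ):ℂ) := by push_cast; ring
  have hplus : epow (m+1) ((((m+1:ℕ):ℤ):ℂ) * (lam+1)) = Complex.exp (2*Real.pi*Complex.I*lam) := by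
    rw [epow, show 2*Real.pi*Complex.I*((((m+1:ℕ):ℤ):ℂ)*(lam+1))/((m+1:ℕ):ℂ)
        = 2*Real.pi*Complex.I*lam + 2*Real.pi*Complex.I from by
      rw [hcast]
      have hne2 : ((m:ℂ)+1) ≠ 0 := by
        have h3 : ((m+1:ℕ):ℂ) ≠ 0 := Nat.cast_ne_zero.mpr (by omega)
        push_cast at h3
        exact h3
      field_simp, Complex.exp_add, Complex.exp_two_pi_mul_I, mul_one]
  have hminus : epow (m+1) (((((-((m+1:ℕ):ℤ)) : ℤ):ℂ)) * (lam+1)) = Complex.exp (-(2*Real.pi*Complex.I*lam)) := by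
    rw [epow, show 2*Real.pi*Complex.I*((((((-((m+1:ℕ):ℤ)) : ℤ)):ℂ))*(lam+1))/((m+1:ℕ):ℂ)
        = -(2*Real.pi*Complex.I*lam) + (-(2*Real.pi*Complex.I)) from by
      rw [show (((((-((m+1:ℕ):ℤ)) : ℤ)):ℂ)) = -((m+1:ℕ):ℂ) from by push_cast; ring]
      have hne2 : ((m:ℂ)+1) ≠ 0 := by
        have h3 : ((m+1:ℕ):ℂ) ≠ 0 := Nat.cast_ne_zero.mpr (by omega)
        push_cast at h3
        exact h3
      field_simp
      ring, Complex.exp_add, Complex.exp_neg (2*Real.pi*Complex.I), Complex.exp_two_pi_mul_I, inv_one, mul_one]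
  rw [hplus, hminus]
  -- qbinom values
  have hQm : qbinom (2*m+1) m (ep (m+1)) = 1 := by
    have h := qbinom_top (p := m+1) hp hprim
    rwa [show 2*(m+1)-1 = 2*m+1 from by omega, show m+1-1 = m from by omega] at h
  have hQm1 : qbinom (2*m+1) (m+1) (ep (m+1)) = 1 := by
    have h := qbinom_symm (q := ep (m+1)) (2*m+1) m (by omega)
    rw [show 2*m+1-m = m+1 from by omega] at h
    rw [h, hQm]
  have hQtop : qbinom (2*m+1) (2*m+1) (ep (m+1)) = 1 := qbinom_self _ _
  -- root of unity powers
  have htri0 : ((∑ i ∈ Finset.range 0, i : ℕ):ℤ) - ((m*0:ℕ):ℤ) = 0 := by simp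
  have htriTop : ((∑ i ∈ Finset.range (2*m+1), i : ℕ):ℤ) - ((m*(2*m+1):ℕ):ℤ) = 0 := by
    have htriN : (∑ i ∈ Finset.range (2*m+1), i) = m*(2*m+1) := by
      have hg := Finset.sum_range_id_mul_two (2*m+1)
      rw [show 2*m+1-1 = 2*m from by omega] at hg
      have he : (2*m+1)*(2*m) = (m*(2*m+1))*2 := by ring
      omega
    rw [htriN, sub_self]
  obtain ⟨k0, hk⟩ := hme
  obtain ⟨k', rfl⟩ : ∃ k', k0 = k'+1 := ⟨k0-1, by omega⟩
  have hEm : (ep (m+1))^(((∑ i ∈ Finset.range m, i : ℕ):ℤ) - ((m*m:ℕ):ℤ)) = 1 := by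
    rw [hprim.zpow_eq_one_iff_dvd]
    have htriv : (∑ i ∈ Finset.range m, i) = (k'+1)*(2*k'+1) := by
      have hg := Finset.sum_range_id_mul_two m
      have he : m*(m-1) = ((k'+1)*(2*k'+1))*2 := by
        rw [hk, show k'+1+(k'+1)-1 = 2*k'+1 from by omega]
        ring
      omega
    refine ⟨-((k'+1:ℕ):ℤ), ?_⟩
    rw [htriv]
    have hmz : (m:ℤ) = 2*(k':ℤ)+2 := by omega
    push_cast
    rw [hmz]
    ring
  have hEm1 : (ep (m+1))^(((∑ i ∈ Finset.range (m+1), i : ℕ):ℤ) - ((m*(m+1):ℕ):ℤ)) = 1 := by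
    rw [show ((∑ i ∈ Finset.range (m+1), i : ℕ):ℤ) - ((m*(m+1):ℕ):ℤ)
        = ((∑ i ∈ Finset.range m, i : ℕ):ℤ) - ((m*m:ℕ):ℤ) from by
      rw [Finset.sum_range_succ]; push_cast; ring]
    exact hEm
  rw [htri0, htriTop, hEm, hEm1, hQm, hQm1, hQtop, qbinom_zero]
  have hm1 : (-1:ℂ)^m = 1 := Even.neg_one_pow ⟨k'+1, hk⟩
  have hm11 : (-1:ℂ)^(m+1) = -1 := by rw [pow_succ, hm1]; ring
  have hm21 : (-1:ℂ)^(2*m+1) = -1 := by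
    rw [pow_succ, pow_mul]; norm_num
  rw [hm1, hm11, hm21]
  simp only [zpow_zero]
  push_cast
  ring


theorem stmt12 (p : ℕ) (hp : 3 ≤ p) (hodd : Odd p) (lam : ℂ) (a : ℕ → ℂ) :
    ∑ m ∈ Finset.range p, a m *
        ∑ n ∈ Finset.range p,
          (epow p (lam + 2 * n + 1) + epow p (-(lam + 2 * n + 1)) - 2) *
            sigma' m (epow p (lam + 2 * n + 1)) (ep p) =
      -2 * p * (∑ m ∈ Finset.range ((p - 3) / 2 + 1),
          (-1) ^ m * a m * qbinom (2 * m + 1) m (ep p) * epow p (-((m : ℂ) * (m + 1)) / 2)) +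
        (p : ℂ) * a (p - 1) * (Complex.exp (2 * Real.pi * Complex.I * lam) +
          Complex.exp (-(2 * Real.pi * Complex.I * lam)) - 2) := by
  obtain ⟨t, ht⟩ := hodd
  obtain ⟨P, rfl⟩ : ∃ P, p = P+1 := ⟨p-1, by omega⟩
  have hodd' : Odd (P+1) := ⟨t, ht⟩
  rw [Finset.sum_range_succ]
  have htop := S_top (P+1) hp hodd' lam
  rw [show P+1-1 = P from by omega] at htop ⊢
  rw [htop]
  have hmain : ∀ m ∈ Finset.range P, a m *
      (∑ n ∈ Finset.range (P+1),
        (epow (P+1) (lam + 2*n + 1) + epow (P+1) (-(lam + 2*n + 1)) - 2) *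
          sigma' m (epow (P+1) (lam + 2*n + 1)) (ep (P+1)))
      = a m * (-2*((P+1:ℕ):ℂ)*((-1)^m * qbinom (2*m+1) m (ep (P+1))
          * epow (P+1) (-((m:ℂ)*(m+1))/2))) := by
    intro m hm
    rw [Finset.mem_range] at hm
    rw [S_lt (P+1) hp hodd' lam m (by omega)]
  rw [Finset.sum_congr rfl hmain]
  have hprim : IsPrimitiveRoot (ep (P+1)) (P+1) := Complex.isPrimitiveRoot_exp _ (by omega)
  have hsub : Finset.range ((P+1-3)/2+1) ⊆ Finset.range P := by
    intro u hu
    rw [Finset.mem_range] at *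
    omega
  rw [← Finset.sum_subset hsub (by
    intro m hm1 hm2
    rw [Finset.mem_range] at hm1 hm2
    push_neg at hm2
    rw [qbinom_vanish hp hprim (by omega) (by omega)]
    ring)]
  rw [Finset.mul_sum]
  congr 1
  · apply Finset.sum_congr rfl
    intro m _
    ring
  · ring
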